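/- Among all 6-element subsets of ZMod 12, the maximum possible number of chords (3-element subsets with all pairwise differences in {3, 4, 5, 7, 8, 9} ⊆ ZMod 12) is exactly 8, and it is attained by the set {0, 1, 4, 5, 8, 9}. -/

import Mathlib

/-- The set of harmonic intervals in ZMod 12. -/
def harmonicSet : Finset (ZMod 12) := {3, 4, 5, 7, 8, 9}

/-- The number of 3-element subsets of S that are chords, i.e. whose elements are
pairwise at harmonic intervals. -/
def chordCount (S : Finset (ZMod 12)) : ℕ :=
  ((S.powersetCard 3).filter (fun c => ∀ x ∈ c, ∀ y ∈ c, x ≠ y → x - y ∈ harmonicSet)).card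

def allChords : Finset (Finset (ZMod 12)) :=
  (Finset.univ.powersetCard 3).filter (fun c => ∀ x ∈ c, ∀ y ∈ c, x ≠ y → x - y ∈ harmonicSet)

lemma count_eq (S : Finset (ZMod 12)) :
    chordCount S = (allChords.filter (fun c => c ⊆ S)).card := by
  unfold chordCount allChords
  rw [Finset.filter_filter]
  congr 1
  ext c
  simp only [Finset.mem_filter, Finset.mem_powersetCard, Finset.subset_univ, true_and]
  tauto

def L : Finset (Finset (ZMod 12)) := {{0, 3, 7}, {0, 3, 8}, {0, 4, 7}, {0, 4, 8}, {0, 4, 9}, {0, 5, 8}, {0, 5, 9}, {1, 4, 8}, {1, 4, 9}, {1, 5, 8}, {1, 5, 9}, {1, 5, 10}, {1, 6, 9}, {1, 6, 10}, {2, 5, 9}, {2, 5, 10}, {2, 6, 9}, {2, 6, 10}, {2, 6, 11}, {2, 7, 10}, {2, 7, 11}, {3, 6, 10}, {3, 6, 11}, {3, 7, 10}, {3, 7, 11}, {3, 8, 11}, {4, 7, 11}, {4, 8, 11}}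

lemma allChords_eq : allChords = L := by decide

lemma ite_eq_toNat (p : Prop) [Decidable p] : (if p then 1 else 0) = (decide p).toNat := by
  by_cases h : p <;> simp [h]

lemma subset_ite (a b c : ZMod 12) (S : Finset (ZMod 12)) :
    (if ({a, b, c} : Finset (ZMod 12)) ⊆ S then 1 else 0)
      = (decide (a ∈ S) && decide (b ∈ S) && decide (c ∈ S)).toNat := by
  by_cases h1 : a ∈ S <;> by_cases h2 : b ∈ S <;> by_cases h3 : c ∈ S <;>
    simp [Finset.insert_subset_iff, h1, h2, h3]

set_option maxRecDepth 10000 in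
set_option maxHeartbeats 4000000 in
lemma auxB : ∀ b0 b1 b2 b3 b4 b5 b6 b7 b8 b9 b10 b11 : Bool,
    b0.toNat + b1.toNat + b2.toNat + b3.toNat + b4.toNat + b5.toNat + b6.toNat + b7.toNat + b8.toNat + b9.toNat + b10.toNat + b11.toNat = 6 →
    (b0 && b3 && b7).toNat + (b0 && b3 && b8).toNat + (b0 && b4 && b7).toNat + (b0 && b4 && b8).toNat + (b0 && b4 && b9).toNat + (b0 && b5 && b8).toNat + (b0 && b5 && b9).toNat + (b1 && b4 && b8).toNat + (b1 && b4 && b9).toNat + (b1 && b5 && b8).toNat + (b1 && b5 && b9).toNat + (b1 && b5 && b10).toNat + (b1 && b6 && b9).toNat + (b1 && b6 && b10).toNat + (b2 && b5 && b9).toNat + (b2 && b5 && b10).toNat + (b2 && b6 && b9).toNat + (b2 && b6 && b10).toNat + (b2 && b6 && b11).toNat + (b2 && b7 && b10).toNat + (b2 && b7 && b11).toNat + (b3 && b6 && b10).toNat + (b3 && b6 && b11).toNat + (b3 && b7 && b10).toNat + (b3 && b7 && b11).toNat + (b3 && b8 && b11).toNat + (b4 && b7 && b11).toNat + (b4 &&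 b8 && b11).toNat ≤ 8 := by
  decide

/-- Among all 6-element subsets of ZMod 12, the maximum possible number
of chords is exactly 8, attained by {0, 1, 4, 5, 8, 9}. -/
theorem stmt_13 :
    (∀ S : Finset (ZMod 12), S.card = 6 → chordCount S ≤ 8) ∧
    ({0, 1, 4, 5, 8, 9} : Finset (ZMod 12)).card = 6 ∧
    chordCount ({0, 1, 4, 5, 8, 9} : Finset (ZMod 12)) = 8 := by
  refine ⟨?_, by decide, by decide⟩
  intro S hS
  have hu : (Finset.univ : Finset (ZMod 12)) = {0,1,2,3,4,5,6,7,8,9,10,11} := by decide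
  have h1 : (decide ((0:ZMod 12) ∈ S)).toNat + (decide ((1:ZMod 12) ∈ S)).toNat
      + (decide ((2:ZMod 12) ∈ S)).toNat + (decide ((3:ZMod 12) ∈ S)).toNat
      + (decide ((4:ZMod 12) ∈ S)).toNat + (decide ((5:ZMod 12) ∈ S)).toNat
      + (decide ((6:ZMod 12) ∈ S)).toNat + (decide ((7:ZMod 12) ∈ S)).toNat
      + (decide ((8:ZMod 12) ∈ S)).toNat + (decide ((9:ZMod 12) ∈ S)).toNat
      + (decide ((10:ZMod 12) ∈ S)).toNat + (decide ((11:ZMod 12) ∈ S)).toNat = 6 := by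
    have hrepr : S = Finset.univ.filter (· ∈ S) := by
      ext x; simp
    rw [hrepr, Finset.card_filter, hu] at hS
    simp only [ite_eq_toNat] at hS
    rw [      Finset.sum_insert (by decide),
      Finset.sum_insert (by decide),
      Finset.sum_insert (by decide),
      Finset.sum_insert (by decide),
      Finset.sum_insert (by decide),
      Finset.sum_insert (by decide),
      Finset.sum_insert (by decide),
      Finset.sum_insert (by decide),
      Finset.sum_insert (by decide),
      Finset.sum_insert (by decide),
      Finset.sum_insert (by decide),
      Finset.sum_singleton] at hS
    omega
  rw [count_eq, allChords_eq, Finset.card_filter]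
  simp only [L]
  rw [    Finset.sum_insert (by decide),
    Finset.sum_insert (by decide),
    Finset.sum_insert (by decide),
    Finset.sum_insert (by decide),
    Finset.sum_insert (by decide),
    Finset.sum_insert (by decide),
    Finset.sum_insert (by decide),
    Finset.sum_insert (by decide),
    Finset.sum_insert (by decide),
    Finset.sum_insert (by decide),
    Finset.sum_insert (by decide),
    Finset.sum_insert (by decide),
    Finset.sum_insert (by decide),
    Finset.sum_insert (by decide),
    Finset.sum_insert (by decide),
    Finset.sum_insert (by decide),
    Finset.sum_insert (by decide),
    Finset.sum_insert (by decide),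
    Finset.sum_insert (by decide),
    Finset.sum_insert (by decide),
    Finset.sum_insert (by decide),
    Finset.sum_insert (by decide),
    Finset.sum_insert (by decide),
    Finset.sum_insert (by decide),
    Finset.sum_insert (by decide),
    Finset.sum_insert (by decide),
    Finset.sum_insert (by decide),
    Finset.sum_singleton]
  simp only [subset_ite]
  have := auxB _ _ _ _ _ _ _ _ _ _ _ _ h1
  simpa only [Nat.add_assoc] using this
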